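/- Let n ≥ 7 be odd and let A be the complementary-left-right majority network on n nodes. If configuration x has exactly ⌈n/2⌉ ones and the number of ones among the nodes of S = {0,...,⌊n/2⌋−2} is i with 1 ≤ i ≤ ⌊n/2⌋−2, then A(x) has at least ⌈n/2⌉+1 ones. -/

import Mathlib

/-- Number of `true` entries of `x` inside the finite set `S`. -/
def onesIn {V : Type*} [DecidableEq V] (S : Finset V) (x : V → Bool) : ℕ :=
  (S.filter (fun v => x v = true)).card

/-- Total number of ones in a configuration. -/
def ones {V : Type*} [Fintype V] [DecidableEq V] (x : V → Bool) : ℕ :=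
  onesIn Finset.univ x

/-- Total number of zeros in a configuration. -/
def zeros {V : Type*} [Fintype V] [DecidableEq V] (x : V → Bool) : ℕ :=
  (Finset.univ.filter (fun v => x v = false)).card

/-- One synchronous step of the majority Boolean automata network with
in-neighborhoods `N`: each node takes the majority state among its
in-neighbors, keeping its current state in case of a tie. -/
def majStep {V : Type*} [Fintype V] [DecidableEq V]
    (N : V → Finset V) (x : V → Bool) : V → Bool :=
  fun v =>
    if (N v).card < 2 * onesIn (N v) x then true
    else if 2 * onesIn (N v) x < (N v).card then false
    else x v

/-- In-neighborhoods of the complementary-left-right digraph.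
With h = ⌊n/2⌋: U = (0,2,...,h-1), R = (1,h,...,n-1), S = (0,...,h-2)
(so S_j = j, |S| = h-1), T = (h-1,...,n-1) (so T_j = h-1+j, |T| = h+2).
Node U_i sees V minus {S_((i+1) mod |S|), S_((i+2) mod |S|)};
node R_i sees V minus {T_((i-1) mod |T|), T_((i-2) mod |T|)}. -/
def clrN (n : ℕ) (v : Fin n) : Finset (Fin n) :=
  let h := n / 2
  let sLen := h - 1
  let tLen := h + 2
  if v.val = 0 ∨ (2 ≤ v.val ∧ v.val ≤ h - 1) then
    -- v = U_i with i = 0 if v = 0, else i = v - 1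
    let i := if v.val = 0 then 0 else v.val - 1
    Finset.univ.filter (fun u : Fin n =>
      u.val ≠ (i + 1) % sLen ∧ u.val ≠ (i + 2) % sLen)
  else
    -- v = R_i with i = 0 if v = 1, else i = v - h + 1
    let i := if v.val = 1 then 0 else v.val - h + 1
    Finset.univ.filter (fun u : Fin n =>
      u.val ≠ h - 1 + (i + tLen - 1) % tLen ∧
      u.val ≠ h - 1 + (i + tLen - 2) % tLen)

lemma consec_mod_ne {m a : ℕ} (hm : 2 ≤ m) : a % m ≠ (a + 1) % m := by
  intro hEq
  have h1 : a % m < m := Nat.mod_lt _ (by omega)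
  have h3 : (a + 1) % m = (a % m + 1) % m := by
    conv_lhs => rw [Nat.add_mod]
    rw [Nat.mod_eq_of_lt (show 1 < m by omega)]
  rcases Nat.lt_or_ge (a % m + 1) m with hlt | hge
  · rw [Nat.mod_eq_of_lt hlt] at h3; omega
  · have : a % m + 1 = m := by omega
    rw [this, Nat.mod_self] at h3
    omega

lemma mod_inj_succ {m a b : ℕ} (ha1 : 1 ≤ a) (ha : a ≤ m) (hb1 : 1 ≤ b) (hb : b ≤ m)
    (h : a % m = b % m) : a = b := by
  rcases eq_or_lt_of_le ha with rfl | ha'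
  · rcases eq_or_lt_of_le hb with rfl | hb'
    · rfl
    · rw [Nat.mod_self, Nat.mod_eq_of_lt hb'] at h; omega
  · rcases eq_or_lt_of_le hb with rfl | hb'
    · rw [Nat.mod_self, Nat.mod_eq_of_lt ha'] at h; omega
    · rwa [Nat.mod_eq_of_lt ha', Nat.mod_eq_of_lt hb'] at h

lemma mod_inj_shift {m a b c : ℕ} (ha : a < m) (hb : b < m)
    (h : (a + c) % m = (b + c) % m) : a = b := by
  have h1 : a ≡ b [MOD m] := Nat.ModEq.add_right_cancel' c h
  have h2 : a % m = b % m := h1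
  rwa [Nat.mod_eq_of_lt ha, Nat.mod_eq_of_lt hb] at h2

lemma cyc_bound (m : ℕ) [NeZero m] (g : ZMod m → Bool)
    (ho : ∃ a, g a = true) (hz : ∃ b, g b = false) :
    (Finset.univ.filter (fun j : ZMod m => g j = true ∧ g (j + 1) = true)).card <
    (Finset.univ.filter (fun j : ZMod m => g j = true)).card := by
  obtain ⟨a, ha⟩ := ho
  obtain ⟨b, hb⟩ := hz
  have hex : ∃ k : ℕ, g (b - (k : ZMod m)) = true := by
    refine ⟨(b - a).val, ?_⟩
    have h5 : ((b - a).val : ZMod m) = b - a := by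
      rw [ZMod.natCast_val, ZMod.cast_id]
    rw [h5]
    simpa using ha
  set k := Nat.find hex with hk
  have hks : g (b - (k : ZMod m)) = true := Nat.find_spec hex
  have hk0 : k ≠ 0 := by
    intro h0
    rw [h0] at hks
    simp [hb] at hks
  have hmin : ¬ g (b - ((k - 1 : ℕ) : ZMod m)) = true := Nat.find_min hex (by omega)
  have hc1 : b - ((k - 1 : ℕ) : ZMod m) = b - (k : ZMod m) + 1 := by
    have h6 : ((k - 1 : ℕ) : ZMod m) = (k : ZMod m) - 1 := by
      have hk1 : 1 ≤ k := by omega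
      push_cast [Nat.cast_sub hk1]
      ring
    rw [h6]; ring
  apply Finset.card_lt_card
  have hsub : (Finset.univ.filter (fun j : ZMod m => g j = true ∧ g (j + 1) = true)) ⊆
      (Finset.univ.filter (fun j : ZMod m => g j = true)) := by
    intro j hj
    simp only [Finset.mem_filter] at hj ⊢
    exact ⟨hj.1, hj.2.1⟩
  rw [Finset.ssubset_iff_of_subset hsub]
  refine ⟨b - (k : ZMod m), ?_, ?_⟩
  · simp [hks]
  · intro hmem
    rw [Finset.mem_filter] at hmem
    rw [← hc1] at hmem
    exact hmin hmem.2.2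

lemma onesIn_exclude (n : ℕ) (x : Fin n → Bool) (p q : Fin n) (hpq : p ≠ q) :
    onesIn (Finset.univ.filter (fun u => u ≠ p ∧ u ≠ q)) x
      + ((if x p = true then 1 else 0) + (if x q = true then 1 else 0)) = ones x := by
  classical
  have key := Finset.card_filter_add_card_filter_not
    (s := Finset.univ.filter (fun u : Fin n => x u = true))
    (p := fun u : Fin n => u ≠ p ∧ u ≠ q)
  have h1 : ((Finset.univ.filter (fun u : Fin n => x u = true)).filter
      (fun u => u ≠ p ∧ u ≠ q)).card
      = onesIn (Finset.univ.filter (fun u => u ≠ p ∧ u ≠ q)) x := by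
    unfold onesIn
    rw [Finset.filter_filter, Finset.filter_filter]
    congr 1
    apply Finset.filter_congr
    intro u _
    tauto
  have h2 : ((Finset.univ.filter (fun u : Fin n => x u = true)).filter
      (fun u => ¬(u ≠ p ∧ u ≠ q))).card
      = (if x p = true then 1 else 0) + (if x q = true then 1 else 0) := by
    have hset : (Finset.univ.filter (fun u : Fin n => x u = true)).filter
        (fun u => ¬(u ≠ p ∧ u ≠ q))
        = ({p, q} : Finset (Fin n)).filter (fun u => x u = true) := by
      ext u
      simp only [Finset.mem_filter, Finset.mem_univ, true_and, Finset.mem_insert,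
        Finset.mem_singleton, not_and_or, not_not]
      tauto
    rw [hset]
    rcases hp : x p <;> rcases hq : x q <;>
      simp [Finset.filter_insert, Finset.filter_singleton, hp, hq, hpq]
  unfold onesIn at h1
  unfold ones onesIn
  omega

lemma step_false_iff {n h : ℕ} (hn : n = 2 * h + 1) (hh : 1 ≤ h) {x : Fin n → Bool}
    (hx : ones x = h + 1) {N : Fin n → Finset (Fin n)} {v p q : Fin n} (hpq : p ≠ q)
    (hN : N v = Finset.univ.filter (fun u => u ≠ p ∧ u ≠ q)) :
    (majStep N x v = false ↔ (x p = true ∧ x q = true)) := by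
  classical
  have hcard : (N v).card = 2 * h - 1 := by
    rw [hN]
    have hset : Finset.univ.filter (fun u : Fin n => u ≠ p ∧ u ≠ q)
        = Finset.univ \ ({p, q} : Finset (Fin n)) := by
      ext u
      simp [not_or]
    rw [hset, Finset.card_sdiff_of_subset (Finset.subset_univ _), Finset.card_pair hpq,
      Finset.card_univ, Fintype.card_fin]
    omega
  have hsum := onesIn_exclude n x p q hpq
  rw [hx, ← hN] at hsum
  unfold majStep
  rcases hp' : x p <;> rcases hq' : x q <;>
    simp only [hp', hq', if_true, if_false, Bool.false_eq_true, Bool.true_eq_false] at hsum ⊢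
  · have hv : onesIn (N v) x = h + 1 := by omega
    rw [hcard, hv, if_pos (by omega)]
    simp
  · have hv : onesIn (N v) x = h := by omega
    rw [hcard, hv, if_pos (by omega)]
    simp
  · have hv : onesIn (N v) x = h := by omega
    rw [hcard, hv, if_pos (by omega)]
    simp
  · have hv : onesIn (N v) x = h - 1 := by omega
    rw [hcard, hv, if_neg (by omega), if_pos (by omega)]
    simp

/-- in the complementary-left-right network, if x has exactly
⌈n/2⌉ ones and the number of ones in S = {0,...,⌊n/2⌋-2} is i with
1 ≤ i ≤ ⌊n/2⌋-2, then A(x) has at least ⌈n/2⌉+1 ones. -/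
theorem stmt9 (n : ℕ) (hn : Odd n) (h7 : 7 ≤ n) (x : Fin n → Bool) (i : ℕ)
    (hi1 : 1 ≤ i) (hi2 : i ≤ n / 2 - 2)
    (hones : ones x = (n + 1) / 2)
    (hSones : onesIn (Finset.univ.filter (fun v : Fin n => v.val ≤ n / 2 - 2)) x = i) :
    (n + 1) / 2 + 1 ≤ ones (majStep (clrN n) x) := by
  classical
  obtain ⟨h, hne, hh3⟩ : ∃ h, n = 2 * h + 1 ∧ 3 ≤ h := by
    obtain ⟨k, hk⟩ := hn
    exact ⟨k, by omega, by omega⟩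
  have hdiv : n / 2 = h := by omega
  have hg : (n + 1) / 2 = h + 1 := by omega
  rw [hdiv] at hi2 hSones
  rw [hg] at hones ⊢
  haveI : NeZero (h - 1) := ⟨by omega⟩
  haveI : NeZero (h + 2) := ⟨by omega⟩
  have hlt1 : ∀ j : ZMod (h - 1), (j.val : ℕ) < n := fun j => by
    have := ZMod.val_lt j; omega
  have hlt2 : ∀ j : ZMod (h + 2), h - 1 + (j.val : ℕ) < n := fun j => by
    have := ZMod.val_lt j; omega
  -- card of ones among S-cycle
  have hO1 : (Finset.univ.filter (fun j : ZMod (h - 1) =>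
      x ⟨j.val, hlt1 j⟩ = true)).card = i := by
    rw [← hSones]
    unfold onesIn
    rw [Finset.filter_filter]
    apply Finset.card_nbij' (i := fun j : ZMod (h - 1) => (⟨j.val, hlt1 j⟩ : Fin n))
      (j := fun v : Fin n => ((v.val : ℕ) : ZMod (h - 1)))
    · intro j hj
      simp only [Finset.mem_coe, Finset.mem_filter, Finset.mem_univ, true_and] at hj ⊢
      have := ZMod.val_lt j
      exact ⟨by omega, hj⟩
    · intro v hv
      simp only [Finset.mem_coe, Finset.mem_filter, Finset.mem_univ, true_and] at hv ⊢
      have hvv : ((v.val : ℕ) : ZMod (h - 1)).val = v.val := by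
        rw [ZMod.val_natCast, Nat.mod_eq_of_lt (by omega)]
      have : (⟨((v.val : ℕ) : ZMod (h - 1)).val, hlt1 _⟩ : Fin n) = v := Fin.ext hvv
      rw [this]
      exact hv.2
    · intro j _
      show ((j.val : ℕ) : ZMod (h - 1)) = j
      rw [ZMod.natCast_val, ZMod.cast_id]
    · intro v hv
      simp only [Finset.mem_coe, Finset.mem_filter, Finset.mem_univ, true_and] at hv
      apply Fin.ext
      show ((v.val : ℕ) : ZMod (h - 1)).val = v.val
      rw [ZMod.val_natCast, Nat.mod_eq_of_lt (by omega)]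
  -- card of ones among T-cycle
  have hST : (Finset.univ.filter (fun v : Fin n => v.val ≤ h - 2 ∧ x v = true)).card
      + (Finset.univ.filter (fun v : Fin n => h - 1 ≤ v.val ∧ x v = true)).card = h + 1 := by
    have hunion : Finset.univ.filter (fun v : Fin n => x v = true)
        = (Finset.univ.filter (fun v : Fin n => v.val ≤ h - 2 ∧ x v = true))
          ∪ (Finset.univ.filter (fun v : Fin n => h - 1 ≤ v.val ∧ x v = true)) := by
      ext u
      simp only [Finset.mem_filter, Finset.mem_univ, true_and, Finset.mem_union]
      constructor
      · intro hu
        rcases le_or_gt u.val (h - 2) with hle | hlt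
        · exact Or.inl ⟨hle, hu⟩
        · exact Or.inr ⟨by omega, hu⟩
      · rintro (⟨_, hu⟩ | ⟨_, hu⟩) <;> exact hu
    have hdisj : Disjoint (Finset.univ.filter (fun v : Fin n => v.val ≤ h - 2 ∧ x v = true))
        (Finset.univ.filter (fun v : Fin n => h - 1 ≤ v.val ∧ x v = true)) := by
      rw [Finset.disjoint_left]
      intro a ha hb
      simp only [Finset.mem_filter] at ha hb
      omega
    have hcards : (Finset.univ.filter (fun v : Fin n => x v = true)).card = h + 1 := by
      have : ones x = (Finset.univ.filter (fun v : Fin n => x v = true)).card := rfl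
      omega
    rw [hunion, Finset.card_union_of_disjoint hdisj] at hcards
    exact hcards
  have hSi : (Finset.univ.filter (fun v : Fin n => v.val ≤ h - 2 ∧ x v = true)).card = i := by
    rw [← hSones]
    unfold onesIn
    rw [Finset.filter_filter]
  have hO2 : (Finset.univ.filter (fun j : ZMod (h + 2) =>
      x ⟨h - 1 + j.val, hlt2 j⟩ = true)).card = h + 1 - i := by
    have hbij : (Finset.univ.filter (fun j : ZMod (h + 2) =>
        x ⟨h - 1 + j.val, hlt2 j⟩ = true)).card
        = (Finset.univ.filter (fun v : Fin n => h - 1 ≤ v.val ∧ x v = true)).card := by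
      apply Finset.card_nbij' (i := fun j : ZMod (h + 2) => (⟨h - 1 + j.val, hlt2 j⟩ : Fin n))
        (j := fun v : Fin n => (((v.val - (h - 1) : ℕ)) : ZMod (h + 2)))
      · intro j hj
        simp only [Finset.mem_coe, Finset.mem_filter, Finset.mem_univ, true_and] at hj ⊢
        exact ⟨by omega, hj⟩
      · intro v hv
        simp only [Finset.mem_coe, Finset.mem_filter, Finset.mem_univ, true_and] at hv ⊢
        have hvlt : v.val - (h - 1) < h + 2 := by
          have := v.isLt; omega
        have hvv : ((v.val - (h - 1) : ℕ) : ZMod (h + 2)).val = v.val - (h - 1) := by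
          rw [ZMod.val_natCast, Nat.mod_eq_of_lt hvlt]
        have : (⟨h - 1 + ((v.val - (h - 1) : ℕ) : ZMod (h + 2)).val, hlt2 _⟩ : Fin n) = v := by
          apply Fin.ext
          show h - 1 + ((v.val - (h - 1) : ℕ) : ZMod (h + 2)).val = v.val
          rw [hvv]; omega
        rw [this]
        exact hv.2
      · intro j _
        show (((h - 1 + j.val) - (h - 1) : ℕ) : ZMod (h + 2)) = j
        have : (h - 1 + j.val) - (h - 1) = j.val := by omega
        rw [this, ZMod.natCast_val, ZMod.cast_id]
      · intro v hv
        simp only [Finset.mem_coe, Finset.mem_filter, Finset.mem_univ, true_and] at hv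
        apply Fin.ext
        show h - 1 + ((v.val - (h - 1) : ℕ) : ZMod (h + 2)).val = v.val
        have hvlt : v.val - (h - 1) < h + 2 := by
          have := v.isLt; omega
        rw [ZMod.val_natCast, Nat.mod_eq_of_lt hvlt]
        omega
    omega
  -- cycle bound for S
  have hb1 : (Finset.univ.filter (fun j : ZMod (h - 1) =>
      x ⟨j.val, hlt1 j⟩ = true ∧ x ⟨(j + 1).val, hlt1 (j + 1)⟩ = true)).card
      < (Finset.univ.filter (fun j : ZMod (h - 1) => x ⟨j.val, hlt1 j⟩ = true)).card := by
    refine cyc_bound (h - 1) (fun j => x ⟨j.val, hlt1 j⟩) ?_ ?_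
    · have hpos : 0 < (Finset.univ.filter (fun j : ZMod (h - 1) =>
          x ⟨j.val, hlt1 j⟩ = true)).card := by omega
      obtain ⟨j, hj⟩ := Finset.card_pos.mp hpos
      exact ⟨j, (Finset.mem_filter.mp hj).2⟩
    · by_contra hno
      push_neg at hno
      have hall : Finset.univ.filter (fun j : ZMod (h - 1) => x ⟨j.val, hlt1 j⟩ = true)
          = Finset.univ := by
        apply Finset.filter_eq_self.mpr
        intro j _
        rcases hxx : x ⟨j.val, hlt1 j⟩ with _ | _
        · exact absurd hxx (by simpa using hno j)
        · rfl
      rw [hall, Finset.card_univ, ZMod.card] at hO1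
      omega
  -- cycle bound for T
  have hb2 : (Finset.univ.filter (fun j : ZMod (h + 2) =>
      x ⟨h - 1 + j.val, hlt2 j⟩ = true ∧ x ⟨h - 1 + (j + 1).val, hlt2 (j + 1)⟩ = true)).card
      < (Finset.univ.filter (fun j : ZMod (h + 2) => x ⟨h - 1 + j.val, hlt2 j⟩ = true)).card := by
    refine cyc_bound (h + 2) (fun j => x ⟨h - 1 + j.val, hlt2 j⟩) ?_ ?_
    · have hpos : 0 < (Finset.univ.filter (fun j : ZMod (h + 2) =>
          x ⟨h - 1 + j.val, hlt2 j⟩ = true)).card := by omega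
      obtain ⟨j, hj⟩ := Finset.card_pos.mp hpos
      exact ⟨j, (Finset.mem_filter.mp hj).2⟩
    · by_contra hno
      push_neg at hno
      have hall : Finset.univ.filter (fun j : ZMod (h + 2) => x ⟨h - 1 + j.val, hlt2 j⟩ = true)
          = Finset.univ := by
        apply Finset.filter_eq_self.mpr
        intro j _
        rcases hxx : x ⟨h - 1 + j.val, hlt2 j⟩ with _ | _
        · exact absurd hxx (by simpa using hno j)
        · rfl
      rw [hall, Finset.card_univ, ZMod.card] at hO2
      omega
  set A := majStep (clrN n) x with hA
  set F := Finset.univ.filter (fun v : Fin n => A v = false) with hFdef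
  have htot : ones A + F.card = n := by
    have hsplit := Finset.card_filter_add_card_filter_not
      (s := (Finset.univ : Finset (Fin n))) (p := fun v : Fin n => A v = true)
    have hnegset : Finset.univ.filter (fun v : Fin n => ¬ A v = true) = F := by
      rw [hFdef]; ext v; simp [Bool.not_eq_true]
    rw [hnegset] at hsplit
    have h1 : ones A = (Finset.univ.filter (fun v : Fin n => A v = true)).card := rfl
    have h2 : (Finset.univ : Finset (Fin n)).card = n := by simp
    omega
  have hmlt1 : ∀ r : ℕ, r % (h - 1) < n := fun r => by
    have := Nat.mod_lt r (y := h - 1) (by omega); omega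
  have hmlt2 : ∀ r : ℕ, h - 1 + r % (h + 2) < n := fun r => by
    have := Nat.mod_lt r (y := h + 2) (by omega); omega
  have hsplitF := Finset.card_filter_add_card_filter_not
    (s := F) (p := fun v : Fin n => v.val = 0 ∨ (2 ≤ v.val ∧ v.val ≤ h - 1))
  -- bound on U-side falses
  have hFU : (F.filter (fun v : Fin n => v.val = 0 ∨ (2 ≤ v.val ∧ v.val ≤ h - 1))).card
      ≤ (Finset.univ.filter (fun j : ZMod (h - 1) =>
        x ⟨j.val, hlt1 j⟩ = true ∧ x ⟨(j + 1).val, hlt1 (j + 1)⟩ = true)).card := by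
    apply Finset.card_le_card_of_injOn
      (fun v : Fin n => (((if v.val = 0 then 0 else v.val - 1) + 1 : ℕ) : ZMod (h - 1)))
    · intro v hv
      simp only [hFdef, Finset.mem_coe, Finset.mem_filter, Finset.mem_univ, true_and] at hv
      obtain ⟨hAv, hcU⟩ := hv
      obtain ⟨iv, hiv⟩ : ∃ t, (if v.val = 0 then 0 else v.val - 1) = t := ⟨_, rfl⟩
      have hivle : iv ≤ h - 2 := by split_ifs at hiv <;> omega
      have hpq : (⟨(iv + 1) % (h - 1), hmlt1 _⟩ : Fin n) ≠ ⟨(iv + 2) % (h - 1), hmlt1 _⟩ := by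
        intro heq
        have hvals := congrArg Fin.val heq
        have h12 : iv + 2 = (iv + 1) + 1 := by omega
        rw [h12] at hvals
        exact consec_mod_ne (show 2 ≤ h - 1 by omega) hvals
      have hclr0 : clrN n v = Finset.univ.filter (fun u : Fin n =>
          u.val ≠ (iv + 1) % (h - 1) ∧ u.val ≠ (iv + 2) % (h - 1)) := by
        simp only [clrN, hdiv]
        rw [if_pos hcU, hiv]
      have hclr : clrN n v = Finset.univ.filter (fun u : Fin n =>
          u ≠ ⟨(iv + 1) % (h - 1), hmlt1 _⟩ ∧ u ≠ ⟨(iv + 2) % (h - 1), hmlt1 _⟩) := by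
        rw [hclr0]
        ext u
        simp only [Finset.mem_filter, Finset.mem_univ, true_and]
        constructor
        · rintro ⟨h1, h2⟩
          exact ⟨fun he => h1 (congrArg Fin.val he), fun he => h2 (congrArg Fin.val he)⟩
        · rintro ⟨h1, h2⟩
          exact ⟨fun he => h1 (Fin.ext he), fun he => h2 (Fin.ext he)⟩
      rw [hA] at hAv
      have hstep := (step_false_iff hne (by omega) hones hpq hclr).mp hAv
      simp only [Finset.mem_coe, Finset.mem_filter, Finset.mem_univ, true_and, hiv]
      constructor
      · have e1 : (⟨((iv + 1 : ℕ) : ZMod (h - 1)).val, hlt1 _⟩ : Fin n)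
            = ⟨(iv + 1) % (h - 1), hmlt1 _⟩ := Fin.ext (by
              show ((iv + 1 : ℕ) : ZMod (h - 1)).val = (iv + 1) % (h - 1)
              rw [ZMod.val_natCast])
        rw [e1]; exact hstep.1
      · have e2 : ((iv + 1 : ℕ) : ZMod (h - 1)) + 1 = ((iv + 2 : ℕ) : ZMod (h - 1)) := by
          push_cast; ring
        have e3 : (⟨(((iv + 1 : ℕ) : ZMod (h - 1)) + 1).val, hlt1 _⟩ : Fin n)
            = ⟨(iv + 2) % (h - 1), hmlt1 _⟩ := Fin.ext (by
              show (((iv + 1 : ℕ) : ZMod (h - 1)) + 1).val = (iv + 2) % (h - 1)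
              rw [e2, ZMod.val_natCast])
        rw [e3]; exact hstep.2
    · intro v hv w hw heq
      simp only [Finset.coe_filter, Set.mem_setOf_eq, hFdef, Finset.mem_filter,
        Finset.mem_univ, true_and] at hv hw
      have hcv := hv.2
      have hcw := hw.2
      have hvals := congrArg ZMod.val heq
      simp only [ZMod.val_natCast] at hvals
      have hbv : (if v.val = 0 then 0 else v.val - 1) ≤ h - 2 := by split_ifs <;> omega
      have hbw : (if w.val = 0 then 0 else w.val - 1) ≤ h - 2 := by split_ifs <;> omega
      have hab : (if v.val = 0 then 0 else v.val - 1) + 1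
          = (if w.val = 0 then 0 else w.val - 1) + 1 :=
        mod_inj_succ (by omega) (by omega) (by omega) (by omega) hvals
      apply Fin.ext
      split_ifs at hab <;> omega
  -- bound on R-side falses
  have hFR : (F.filter (fun v : Fin n => ¬(v.val = 0 ∨ (2 ≤ v.val ∧ v.val ≤ h - 1)))).card
      ≤ (Finset.univ.filter (fun j : ZMod (h + 2) =>
        x ⟨h - 1 + j.val, hlt2 j⟩ = true ∧ x ⟨h - 1 + (j + 1).val, hlt2 (j + 1)⟩ = true)).card := by
    apply Finset.card_le_card_of_injOn
      (fun v : Fin n => (((if v.val = 1 then 0 else v.val - h + 1) + (h + 2) - 2 : ℕ) : ZMod (h + 2)))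
    · intro v hv
      simp only [hFdef, Finset.mem_coe, Finset.mem_filter, Finset.mem_univ, true_and] at hv
      obtain ⟨hAv, hcU⟩ := hv
      have hvlt := v.isLt
      obtain ⟨iv, hiv⟩ : ∃ t, (if v.val = 1 then 0 else v.val - h + 1) = t := ⟨_, rfl⟩
      have hivle : iv ≤ h + 1 := by split_ifs at hiv <;> omega
      have h21 : iv + (h + 2) - 1 = (iv + (h + 2) - 2) + 1 := by omega
      have hpq : (⟨h - 1 + (iv + (h + 2) - 1) % (h + 2), hmlt2 _⟩ : Fin n)
          ≠ ⟨h - 1 + (iv + (h + 2) - 2) % (h + 2), hmlt2 _⟩ := by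
        intro heq
        have hvals := congrArg Fin.val heq
        simp only at hvals
        rw [h21] at hvals
        have hcm := consec_mod_ne (m := h + 2) (a := iv + (h + 2) - 2) (show 2 ≤ h + 2 by omega)
        omega
      have hclr0 : clrN n v = Finset.univ.filter (fun u : Fin n =>
          u.val ≠ h - 1 + (iv + (h + 2) - 1) % (h + 2) ∧
          u.val ≠ h - 1 + (iv + (h + 2) - 2) % (h + 2)) := by
        simp only [clrN, hdiv]
        rw [if_neg hcU, hiv]
      have hclr : clrN n v = Finset.univ.filter (fun u : Fin n =>
          u ≠ ⟨h - 1 + (iv + (h + 2) - 1) % (h + 2), hmlt2 _⟩ ∧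
          u ≠ ⟨h - 1 + (iv + (h + 2) - 2) % (h + 2), hmlt2 _⟩) := by
        rw [hclr0]
        ext u
        simp only [Finset.mem_filter, Finset.mem_univ, true_and]
        constructor
        · rintro ⟨h1, h2⟩
          exact ⟨fun he => h1 (congrArg Fin.val he), fun he => h2 (congrArg Fin.val he)⟩
        · rintro ⟨h1, h2⟩
          exact ⟨fun he => h1 (Fin.ext he), fun he => h2 (Fin.ext he)⟩
      rw [hA] at hAv
      have hstep := (step_false_iff hne (by omega) hones hpq hclr).mp hAv
      simp only [Finset.mem_coe, Finset.mem_filter, Finset.mem_univ, true_and, hiv]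
      constructor
      · have e1 : (⟨h - 1 + ((iv + (h + 2) - 2 : ℕ) : ZMod (h + 2)).val, hlt2 _⟩ : Fin n)
            = ⟨h - 1 + (iv + (h + 2) - 2) % (h + 2), hmlt2 _⟩ :=
          Fin.ext (by
            show h - 1 + ((iv + (h + 2) - 2 : ℕ) : ZMod (h + 2)).val
              = h - 1 + (iv + (h + 2) - 2) % (h + 2)
            rw [ZMod.val_natCast])
        rw [e1]; exact hstep.2
      · have e2 : ((iv + (h + 2) - 2 : ℕ) : ZMod (h + 2)) + 1
            = ((iv + (h + 2) - 1 : ℕ) : ZMod (h + 2)) := by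
          rw [h21]; push_cast; ring
        have e3 : (⟨h - 1 + (((iv + (h + 2) - 2 : ℕ) : ZMod (h + 2)) + 1).val, hlt2 _⟩ : Fin n)
            = ⟨h - 1 + (iv + (h + 2) - 1) % (h + 2), hmlt2 _⟩ :=
          Fin.ext (by
            show h - 1 + (((iv + (h + 2) - 2 : ℕ) : ZMod (h + 2)) + 1).val
              = h - 1 + (iv + (h + 2) - 1) % (h + 2)
            rw [e2, ZMod.val_natCast])
        rw [e3]; exact hstep.1
    · intro v hv w hw heq
      simp only [Finset.coe_filter, Set.mem_setOf_eq, hFdef, Finset.mem_filter,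
        Finset.mem_univ, true_and] at hv hw
      have hcv := hv.2
      have hcw := hw.2
      have hvv := v.isLt
      have hww := w.isLt
      have hvals := congrArg ZMod.val heq
      simp only [ZMod.val_natCast] at hvals
      have hbv : (if v.val = 1 then 0 else v.val - h + 1) < h + 2 := by split_ifs <;> omega
      have hbw : (if w.val = 1 then 0 else w.val - h + 1) < h + 2 := by split_ifs <;> omega
      have hv' : (if v.val = 1 then 0 else v.val - h + 1) + (h + 2) - 2
          = (if v.val = 1 then 0 else v.val - h + 1) + h := by omega
      have hw' : (if w.val = 1 then 0 else w.val - h + 1) + (h + 2) - 2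
          = (if w.val = 1 then 0 else w.val - h + 1) + h := by omega
      rw [hv', hw'] at hvals
      have hab := mod_inj_shift hbv hbw hvals
      apply Fin.ext
      split_ifs at hab <;> omega
  omega
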